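/- (Poisson-type summation) For any compactly supported locally constant f on K/Q_ℓ and any t ∈ K, ∫_{o_K} f(x+t) dx = q^{-δ/2} ∫_{𝔡^{-1}} f̂(y) ζ^{-tr(ty)} dy. -/

import Mathlib

open scoped Classical

lemma finQuotPow {A : Type*} [CommRing A] (p : A)
    (h1 : Finite (A ⧸ Ideal.span {p})) (k : ℕ) :
    Finite (A ⧸ Ideal.span {p ^ k}) := by
  induction k with
  | zero =>
    have : Ideal.span {p ^ 0} = ⊤ := by simp [Ideal.span_singleton_eq_top]
    rw [this]; infer_instance
  | succ k ih =>
    have hsurj : Function.Surjective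
        (fun c : (A ⧸ Ideal.span {p ^ k}) × (A ⧸ Ideal.span {p}) =>
          Ideal.Quotient.mk (Ideal.span {p ^ (k+1)}) (c.1.out + p ^ k * c.2.out)) := by
      intro x
      obtain ⟨a, rfl⟩ := Ideal.Quotient.mk_surjective x
      set c1 := Ideal.Quotient.mk (Ideal.span {p ^ k}) a with hc1
      have h1 : a - c1.out ∈ Ideal.span {p ^ k} := by
        rw [← Ideal.Quotient.eq]; exact (Quotient.out_eq _).symm
      obtain ⟨y, hy⟩ := Ideal.mem_span_singleton.mp h1
      set c2 := Ideal.Quotient.mk (Ideal.span {p}) y with hc2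
      have h2 : y - c2.out ∈ Ideal.span {p} := by
        rw [← Ideal.Quotient.eq]; exact (Quotient.out_eq _).symm
      obtain ⟨z, hz⟩ := Ideal.mem_span_singleton.mp h2
      refine ⟨(c1, c2), ?_⟩
      simp only
      rw [Ideal.Quotient.eq]
      have : c1.out + p ^ k * c2.out - a = -(p^(k+1)*z) := by
        have e1 : a = c1.out + p ^ k * y := by linear_combination hy
        have e2 : y = c2.out + p * z := by linear_combination hz
        rw [e1, e2]; ring
      rw [this]
      exact neg_mem (Ideal.mem_span_singleton.mpr ⟨z, rfl⟩)
    exact Finite.of_surjective _ hsurj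

lemma dvd_pow_of_chain {A : Type*} [CommRing A] [IsDomain A] [IsNoetherianRing A]
    (p : A) (hp : ¬IsUnit p) (hgen : ∀ c : A, ¬IsUnit c → ∃ d, c = p * d) :
    ∀ c : A, c ≠ 0 → ∃ m : ℕ, c ∣ p ^ m := by
  have H : ∀ I : Ideal A, ∀ c : A, Ideal.span {c} = I → c ≠ 0 → ∃ m : ℕ, c ∣ p ^ m := by
    intro I
    induction I using IsNoetherian.induction with
    | _ I ih =>
      rintro c rfl hc
      by_cases hu : IsUnit c
      · exact ⟨0, hu.dvd⟩
      · obtain ⟨d, hd⟩ := hgen c hu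
        have hd0 : d ≠ 0 := by rintro rfl; simp at hd; tauto
        have hlt : Ideal.span {c} < Ideal.span {d} := by
          constructor
          · exact Ideal.span_singleton_le_span_singleton.mpr ⟨p, by linear_combination hd⟩
          · intro hle
            have : d ∈ Ideal.span {c} := hle (Ideal.mem_span_singleton_self d)
            obtain ⟨e, he⟩ := Ideal.mem_span_singleton.mp this
            have : d * (1 - e * p) = 0 := by rw [hd] at he; linear_combination he
            rcases mul_eq_zero.mp this with h | h
            · exact hd0 h
            · exact hp (IsUnit.of_mul_eq_one e (by linear_combination -h))
        obtain ⟨m, hm⟩ := ih (Ideal.span {d}) hlt d rfl hd0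
        exact ⟨m + 1, by rw [hd, pow_succ, mul_comm (p^m) p]; exact mul_dvd_mul_left p hm⟩
  exact fun c => H (Ideal.span {c}) c rfl

lemma exists_pow_mul_mem {ℓ : ℕ} [Fact (Nat.Prime ℓ)]
    {K : Type*} [Field K] [Algebra ℚ_[ℓ] K] [FiniteDimensional ℚ_[ℓ] K]
    [Algebra ℤ_[ℓ] K] [IsScalarTower ℤ_[ℓ] ℚ_[ℓ] K]
    (O : Subring K) (hO : ∀ x : K, x ∈ O ↔ IsIntegral ℤ_[ℓ] x)
    (π : K) (hπO : π ∈ O)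
    (hπunif : ¬ IsUnit (⟨π, hπO⟩ : O))
    (hgen : ∀ x (hx : x ∈ O), ¬ IsUnit (⟨x, hx⟩ : O) → ∃ y ∈ O, x = π * y)
    (x : K) : ∃ M : ℕ, π ^ M * x ∈ O := by
  haveI hNoeth : IsNoetherianRing O := by
    haveI : IsNoetherianRing (integralClosure ℤ_[ℓ] K) :=
      integralClosure.isNoetherianRing (A := ℤ_[ℓ]) (K := ℚ_[ℓ]) (L := K)
    exact isNoetherianRing_of_ringEquiv _
      ({ toFun := fun z => (⟨z.1, (hO z.1).mpr z.2⟩ : O),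
         invFun := fun z => ⟨z.1, (hO z.1).mp z.2⟩,
         left_inv := fun _ => rfl, right_inv := fun _ => rfl,
         map_mul' := fun _ _ => rfl, map_add' := fun _ _ => rfl } :
        (integralClosure ℤ_[ℓ] K) ≃+* O)
  have halg : IsAlgebraic ℤ_[ℓ] x :=
    (IsFractionRing.isAlgebraic_iff ℤ_[ℓ] ℚ_[ℓ] K).mpr (Algebra.IsAlgebraic.isAlgebraic x)
  have inj : ∀ a : ℤ_[ℓ], algebraMap ℤ_[ℓ] K a = 0 → a = 0 := by
    intro a ha
    have : algebraMap ℚ_[ℓ] K (algebraMap ℤ_[ℓ] ℚ_[ℓ] a) = 0 := by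
      rw [← IsScalarTower.algebraMap_apply]; exact ha
    simpa using this
  obtain ⟨y, hy0, hint⟩ := halg.exists_integral_multiple
  obtain ⟨z, hyx⟩ : ∃ z : integralClosure ℤ_[ℓ] K, algebraMap ℤ_[ℓ] K y * x = z :=
    ⟨⟨y • x, hint⟩, (Algebra.smul_def y x).symm⟩
  set c : K := algebraMap ℤ_[ℓ] K y with hc
  have hcO : c ∈ O := (hO c).mpr (isIntegral_algebraMap)
  have hc0 : c ≠ 0 := fun h => hy0 (inj y h)
  have hcx : c * x ∈ O := by rw [hyx]; exact (hO _).mpr z.2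
  have hgen' : ∀ d : O, ¬IsUnit d → ∃ e : O, d = (⟨π, hπO⟩ : O) * e := by
    rintro ⟨dv, hd⟩ hdu
    obtain ⟨e, he, hde⟩ := hgen dv hd hdu
    exact ⟨⟨e, he⟩, Subtype.ext hde⟩
  obtain ⟨m, d, hd⟩ := dvd_pow_of_chain (⟨π, hπO⟩ : O) hπunif hgen'
    ⟨c, hcO⟩ (fun h => hc0 (congrArg Subtype.val h))
  refine ⟨m, ?_⟩
  have : (π : K) ^ m = c * (d : K) := by
    have := congrArg (Subtype.val) hd
    push_cast at this
    simpa using this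
  rw [this, mul_assoc, mul_comm (d:K) x, ← mul_assoc]
  exact mul_mem hcx d.2

lemma q_ne_zero {ℓ : ℕ} [Fact (Nat.Prime ℓ)]
    {K : Type*} [Field K] [Algebra ℚ_[ℓ] K] [FiniteDimensional ℚ_[ℓ] K]
    [Algebra ℤ_[ℓ] K] [IsScalarTower ℤ_[ℓ] ℚ_[ℓ] K]
    {Cp : Type*} [NormedField Cp]
    (O : Subring K) (hO : ∀ x : K, x ∈ O ↔ IsIntegral ℤ_[ℓ] x)
    (π : K) (hπO : π ∈ O)
    (hπunif : ¬ IsUnit (⟨π, hπO⟩ : O))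
    (hgen : ∀ x (hx : x ∈ O), ¬ IsUnit (⟨x, hx⟩ : O) → ∃ y ∈ O, x = π * y)
    (q : ℕ) (hq1 : 1 < q)
    (hq : Nat.card (O ⧸ Ideal.span {(⟨π, hπO⟩ : O)}) = q)
    (ψ : AddChar ℚ_[ℓ] Cp) (hψ : ∀ x : ℚ_[ℓ], ψ x = 1 ↔ ‖x‖ ≤ 1) :
    (q : Cp) ≠ 0 := by
  have hℓ1 : 1 < ℓ := (Fact.out : Nat.Prime ℓ).one_lt
  -- the residue ring
  set k1 := O ⧸ Ideal.span {(⟨π, hπO⟩ : O)} with hk1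
  haveI hfinQ : Finite k1 := by
    have : 0 < Nat.card k1 := by rw [hq]; omega
    exact (Nat.card_pos_iff.mp this).2
  haveI : Fintype k1 := Fintype.ofFinite _
  haveI : Nontrivial k1 := Fintype.one_lt_card_iff_nontrivial.mp
    (by rw [← Nat.card_eq_fintype_card, hq]; exact hq1)
  -- ℓ is a nonunit in O
  have hlmem : ((ℓ : ℕ) : K) ∈ O := by
    refine (hO _).mpr ?_
    have : ((ℓ : ℕ) : K) = algebraMap ℤ_[ℓ] K ((ℓ : ℕ) : ℤ_[ℓ]) := by rw [map_natCast]
    rw [this]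
    exact isIntegral_algebraMap
  have hlnonunit : ¬ IsUnit (((ℓ:ℕ)) : O) := by
    intro hu
    obtain ⟨v, hv⟩ := hu.exists_right_inv
    have hvK : ((ℓ:ℕ) : K) * (v : K) = 1 := by
      have := congrArg Subtype.val hv
      push_cast at this
      exact this
    have hlK0 : ((ℓ:ℕ) : K) ≠ 0 := by
      have : ((ℓ:ℕ) : ℚ_[ℓ]) ≠ 0 := Nat.cast_ne_zero.mpr (by omega)
      rw [show ((ℓ:ℕ) : K) = algebraMap ℚ_[ℓ] K ((ℓ:ℕ) : ℚ_[ℓ]) by rw [map_natCast]]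
      simpa using ((algebraMap ℚ_[ℓ] K).injective.ne_iff' (map_zero _)).mpr this
    have hvKinv : (v : K) = (((ℓ:ℕ) : K))⁻¹ := by
      field_simp at hvK ⊢
      linear_combination hvK
    have hvint : IsIntegral ℤ_[ℓ] (algebraMap ℚ_[ℓ] K (((ℓ:ℕ) : ℚ_[ℓ]))⁻¹) := by
      have h1 : algebraMap ℚ_[ℓ] K (((ℓ:ℕ) : ℚ_[ℓ]))⁻¹ = (v : K) := by
        rw [map_inv₀, map_natCast, hvKinv]
      rw [h1]
      exact (hO _).mp v.2
    have hvint2 : IsIntegral ℤ_[ℓ] ((((ℓ:ℕ) : ℚ_[ℓ]))⁻¹) :=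
      (isIntegral_algebraMap_iff ((algebraMap ℚ_[ℓ] K).injective)).mp hvint
    obtain ⟨y, hy⟩ := IsIntegrallyClosed.isIntegral_iff.mp hvint2
    have hnorm : ‖(((ℓ:ℕ) : ℚ_[ℓ]))⁻¹‖ ≤ 1 := by
      rw [← hy]
      exact PadicInt.norm_le_one y  -- maybe wrong name
    rw [norm_inv, Padic.norm_p, inv_inv] at hnorm
    exact absurd hnorm (not_le.mpr (by exact_mod_cast hℓ1))
  -- char k1 = ℓ
  have hcast0 : ((ℓ : ℕ) : k1) = 0 := by
    have h2 : (((ℓ:ℕ) : O) : K) ∈ O := ((ℓ:ℕ) : O).2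
    obtain ⟨y, hyO, hly⟩ := hgen (((ℓ:ℕ) : O) : K) h2 (by
      intro hu
      exact hlnonunit hu)
    have h5 : ((ℓ:ℕ) : O) = (⟨π, hπO⟩ : O) * ⟨y, hyO⟩ := Subtype.ext hly
    have hmem : ((ℓ:ℕ) : O) ∈ Ideal.span {(⟨π, hπO⟩ : O)} :=
      Ideal.mem_span_singleton.mpr ⟨⟨y, hyO⟩, h5⟩
    rw [show ((ℓ : ℕ) : k1) = Ideal.Quotient.mk _ ((ℓ:ℕ) : O) by rw [map_natCast]]
    exact Ideal.Quotient.eq_zero_iff_mem.mpr hmem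
  have hqpow : ∃ n : ℕ, q = ℓ ^ n := by
    have hpg : IsPGroup ℓ (Multiplicative k1) := by
      intro g
      refine ⟨1, ?_⟩
      have hx : (ℓ ^ 1) • (Multiplicative.toAdd g) = 0 := by
        rw [nsmul_eq_mul]
        push_cast
        rw [hcast0]
        ring
      have hgeq : g ^ ℓ ^ 1 = Multiplicative.ofAdd ((ℓ ^ 1) • Multiplicative.toAdd g) := by
        rw [ofAdd_nsmul]
        rfl
      rw [hgeq, hx]
      rfl
    obtain ⟨n, hn⟩ := (IsPGroup.iff_card (p := ℓ) (G := Multiplicative k1)).mp hpg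
    refine ⟨n, ?_⟩
    rw [← hq, Nat.card_eq_fintype_card]
    simpa using hn
  obtain ⟨n, hqpow⟩ := hqpow
  -- ℓ ≠ 0 in Cp
  have hl : ((ℓ : ℕ) : Cp) ≠ 0 := by
    intro h0
    have hdvd : ringChar Cp ∣ ℓ := (CharP.cast_eq_zero_iff Cp (ringChar Cp) ℓ).mp h0
    have hchar : ringChar Cp = ℓ := by
      rcases ((Fact.out : Nat.Prime ℓ).eq_one_or_self_of_dvd _ hdvd) with h | h
      · exact absurd h CharP.ringChar_ne_one
      · exact h
    haveI : CharP Cp ℓ := hchar ▸ ringChar.charP Cp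
    set x : ℚ_[ℓ] := ((ℓ : ℚ_[ℓ]))⁻¹ with hx
    have hxn : ‖x‖ = (ℓ : ℝ) := by
      rw [hx, norm_inv, Padic.norm_p, inv_inv]
    have h1 : ψ x ≠ 1 := by
      intro hh
      have := (hψ x).mp hh
      rw [hxn] at this
      exact absurd this (not_le.mpr (by exact_mod_cast hℓ1))
    have h2 : (ψ x) ^ ℓ = 1 := by
      rw [← AddChar.map_nsmul_eq_pow, nsmul_eq_mul, hx,
        mul_inv_cancel₀ (by exact_mod_cast (by omega : ℓ ≠ 0) : ((ℓ:ℕ) : ℚ_[ℓ]) ≠ 0)]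
      exact (hψ 1).mpr (by simp)
    have h3 : (ψ x - 1) ^ ℓ = 0 := by
      rw [sub_pow_char, h2, one_pow, sub_self]
    have h4 : ψ x - 1 = 0 := pow_eq_zero_iff (n := ℓ) (by omega) |>.mp h3
    exact h1 (sub_eq_zero.mp h4)
  rw [hqpow]
  push_cast
  exact pow_ne_zero _ hl

lemma core_lemma {ℓ : ℕ} [Fact (Nat.Prime ℓ)]
    {K : Type*} [Field K] [Algebra ℚ_[ℓ] K] [FiniteDimensional ℚ_[ℓ] K]
    {Cp : Type*} [NormedField Cp]
    (O : Subring K)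
    (π : K) (hπ0 : π ≠ 0) (hπO : π ∈ O)
    (q : ℕ) (sq : Cp) (δ : ℕ)
    (hδ : ∀ x : K, (∀ y ∈ O, ‖Algebra.trace ℚ_[ℓ] K (x * y)‖ ≤ 1) ↔ π ^ δ * x ∈ O)
    (ψ : AddChar ℚ_[ℓ] Cp) (hψ : ∀ x : ℚ_[ℓ], ψ x = 1 ↔ ‖x‖ ≤ 1)
    (I : (K → Cp) →ₗ[Cp] Cp)
    (hI : ∀ (a : K) (N : ℤ),
      I (fun x => if ∃ y ∈ O, x = a + π ^ N * y then 1 else 0) =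
        sq⁻¹ ^ δ * (q : Cp) ^ (-N))
    (hFin : ∀ k : ℕ, Finite (O ⧸ Ideal.span {(⟨π, hπO⟩ : O) ^ k}))
    (hF1 : ∀ x : K, ∃ M : ℕ, π ^ M * x ∈ O)
    (b cc : K) (M : ℤ) :
    I (fun x => (if ∃ u ∈ O, x = cc + π ^ M * u then 1 else 0) *
        ψ (Algebra.trace ℚ_[ℓ] K (x * b))) =
      if π ^ δ * (π ^ M * b) ∈ O then
        ψ (Algebra.trace ℚ_[ℓ] K (cc * b)) * (sq⁻¹ ^ δ * (q : Cp) ^ (-M)) else 0 := by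
  have hzadd : ∀ (m : ℤ) (j : ℕ), π ^ (m + (j:ℤ)) = π ^ m * π ^ j := by
    intro m j
    rw [zpow_add₀ hπ0, zpow_natCast]
  by_cases h : π ^ δ * (π ^ M * b) ∈ O
  · have triv : ∀ u ∈ O, ψ (Algebra.trace ℚ_[ℓ] K ((π ^ M * u) * b)) = 1 := by
      intro u hu
      rw [hψ]
      have := (hδ (π ^ M * b)).mpr h u hu
      convert this using 3
      ring
    have funeq : (fun x => (if ∃ u ∈ O, x = cc + π ^ M * u then 1 else 0) *
        ψ (Algebra.trace ℚ_[ℓ] K (x * b)))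
        = ψ (Algebra.trace ℚ_[ℓ] K (cc * b)) •
          (fun x => if ∃ u ∈ O, x = cc + π ^ M * u then (1:Cp) else 0) := by
      funext x
      by_cases hx : ∃ u ∈ O, x = cc + π ^ M * u
      · obtain ⟨u, hu, rfl⟩ := hx
        have harg : (cc + π ^ M * u) * b =
            cc * b + (π ^ M * u) * b := by ring
        rw [if_pos ⟨u, hu, rfl⟩, Pi.smul_apply, if_pos ⟨u, hu, rfl⟩, harg, map_add,
          AddChar.map_add_eq_mul, triv u hu, smul_eq_mul]
        ring
      · simp [hx]
    rw [funeq, map_smul, hI, smul_eq_mul, if_pos h]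
  · obtain ⟨k, hk⟩ := hF1 (π ^ δ * (π ^ M * b))
    have h2 : π ^ δ * (π ^ (M + (k:ℤ)) * b) ∈ O := by
      have e : π ^ δ * (π ^ (M + (k:ℤ)) * b) = π ^ k * (π ^ δ * (π ^ M * b)) := by
        rw [hzadd]; ring
      rw [e]; exact hk
    have trivk : ∀ w : O, ψ (Algebra.trace ℚ_[ℓ] K ((π ^ (M + (k:ℤ)) * (w:K)) * b)) = 1 := by
      intro w
      rw [hψ]
      have := (hδ (π ^ (M + (k:ℤ)) * b)).mpr h2 w w.2
      convert this using 3
      ring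
    haveI := hFin k
    haveI : Fintype (O ⧸ Ideal.span {(⟨π, hπO⟩ : O) ^ k}) := Fintype.ofFinite _
    set Jk : Ideal O := Ideal.span {(⟨π, hπO⟩ : O) ^ k} with hJk
    set rep : O → O := fun u => (Ideal.Quotient.mk Jk u).out with hrepdef
    set R : Finset O := Finset.univ.image (fun c : O ⧸ Jk => c.out) with hR
    have hmk : ∀ u : O, Ideal.Quotient.mk Jk (rep u) = Ideal.Quotient.mk Jk u := by
      intro u; exact Quotient.out_eq _
    have hmem : ∀ u : O, rep u ∈ R := by
      intro u; exact Finset.mem_image.mpr ⟨_, Finset.mem_univ _, rfl⟩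
    have hfix : ∀ r ∈ R, rep r = r := by
      intro r hr
      obtain ⟨c, -, rfl⟩ := Finset.mem_image.mp hr
      exact congrArg Quotient.out (Quotient.out_eq c)
    have hdiff : ∀ u v : O, Ideal.Quotient.mk Jk u = Ideal.Quotient.mk Jk v →
        ∃ w : O, (u : K) = (v : K) + π ^ k * (w : K) := by
      intro u v huv
      obtain ⟨w, hw⟩ := Ideal.mem_span_singleton.mp (Ideal.Quotient.eq.mp huv)
      refine ⟨w, ?_⟩
      have h3 := congrArg (Subtype.val) hw
      push_cast at h3
      linear_combination h3
    have hinv : ∀ u v : O, Ideal.Quotient.mk Jk u = Ideal.Quotient.mk Jk v →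
        ψ (Algebra.trace ℚ_[ℓ] K ((cc + π ^ M * (u:K)) * b)) =
        ψ (Algebra.trace ℚ_[ℓ] K ((cc + π ^ M * (v:K)) * b)) := by
      intro u v huv
      obtain ⟨w, hw⟩ := hdiff u v huv
      have harg : (cc + π ^ M * (u:K)) * b =
          (cc + π ^ M * (v:K)) * b + (π ^ (M + (k:ℤ)) * (w:K)) * b := by
        rw [hw, hzadd]; ring
      rw [harg, map_add, AddChar.map_add_eq_mul, trivk w, mul_one]
    -- decomposition
    have hdec : (fun x => (if ∃ u ∈ O, x = cc + π ^ M * u then 1 else 0) *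
        ψ (Algebra.trace ℚ_[ℓ] K (x * b))) =
        ∑ r ∈ R, ψ (Algebra.trace ℚ_[ℓ] K ((cc + π ^ M * (r:K)) * b)) •
          (fun x => if ∃ u ∈ O, x = (cc + π ^ M * (r:K)) + π ^ (M + (k:ℤ)) * u
            then (1:Cp) else 0) := by
      funext x
      rw [Finset.sum_apply]
      by_cases hx : ∃ u ∈ O, x = cc + π ^ M * u
      · obtain ⟨u, huO, rfl⟩ := hx
        have hiff : ∀ r ∈ R,
            ((∃ v ∈ O, cc + π ^ M * u = (cc + π ^ M * (r:K)) + π ^ (M + (k:ℤ)) * v)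
              ↔ r = rep ⟨u, huO⟩) := by
          intro r hr
          constructor
          · rintro ⟨v, hvO, hv⟩
            rw [hzadd] at hv
            have hu : u = (r:K) + π ^ k * v := by
              have h4 : π ^ M * u = π ^ M * ((r:K) + π ^ k * v) := by linear_combination hv
              exact mul_left_cancel₀ (zpow_ne_zero _ hπ0) h4
            have h5 : (⟨u, huO⟩ : O) = r + ⟨π, hπO⟩ ^ k * ⟨v, hvO⟩ := by
              apply Subtype.ext; push_cast; exact hu
            have hmkeq : Ideal.Quotient.mk Jk ⟨u, huO⟩ = Ideal.Quotient.mk Jk r := by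
              apply Ideal.Quotient.eq.mpr
              rw [h5]
              have e : r + (⟨π, hπO⟩:O) ^ k * ⟨v, hvO⟩ - r = (⟨π, hπO⟩:O) ^ k * ⟨v, hvO⟩ := by
                ring
              rw [e]
              exact Ideal.mem_span_singleton.mpr ⟨_, rfl⟩
            have h6 : rep ⟨u, huO⟩ = rep r := congrArg Quotient.out hmkeq
            rw [hfix r hr] at h6
            exact h6.symm
          · rintro rfl
            obtain ⟨w, hw⟩ := hdiff ⟨u, huO⟩ (rep ⟨u, huO⟩) (hmk _).symm
            refine ⟨w, w.2, ?_⟩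
            rw [hzadd]
            linear_combination (π ^ M) * hw
        have hstep : ∀ r ∈ R,
            (ψ (Algebra.trace ℚ_[ℓ] K ((cc + π ^ M * (r:K)) * b)) •
              (fun x => if ∃ u ∈ O, x = (cc + π ^ M * (r:K)) + π ^ (M + (k:ℤ)) * u
                then (1:Cp) else 0)) (cc + π ^ M * u)
            = if r = rep ⟨u, huO⟩
                then ψ (Algebra.trace ℚ_[ℓ] K ((cc + π ^ M * (r:K)) * b)) else 0 := by
          intro r hr
          rw [Pi.smul_apply, smul_eq_mul, if_congr (hiff r hr) rfl rfl, mul_ite, mul_one, mul_zero]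
        rw [Finset.sum_congr rfl hstep, Finset.sum_ite_eq' R (rep ⟨u, huO⟩), if_pos (hmem _),
          if_pos ⟨u, huO, rfl⟩, one_mul]
        exact (hinv (rep ⟨u, huO⟩) ⟨u, huO⟩ (hmk _)).symm
      · rw [if_neg hx, zero_mul]
        refine (Finset.sum_eq_zero ?_).symm
        intro r hr
        rw [Pi.smul_apply, smul_eq_mul]
        have : ¬ ∃ v ∈ O, x = (cc + π ^ M * (r:K)) + π ^ (M + (k:ℤ)) * v := by
          rintro ⟨v, hvO, rfl⟩
          exact hx ⟨(r:K) + π ^ k * v, add_mem r.2 (mul_mem (pow_mem hπO k) hvO),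
            by rw [hzadd]; ring⟩
        rw [if_neg this, mul_zero]
    rw [hdec, map_sum]
    simp only [map_smul, hI, smul_eq_mul]
    rw [← Finset.sum_mul]
    -- the character sum vanishes
    have hne : ∃ u₀ : O, ψ (Algebra.trace ℚ_[ℓ] K ((π ^ M * (u₀:K)) * b)) ≠ 1 := by
      have := mt (hδ (π ^ M * b)).mp h
      push_neg at this
      obtain ⟨u₀, hu₀O, hgt⟩ := this
      refine ⟨⟨u₀, hu₀O⟩, fun h' => absurd ((hψ _).mp ?_) (not_le.mpr hgt)⟩
      convert h' using 3
      ring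
    obtain ⟨u₀, hu₀⟩ := hne
    set S : Cp := ∑ r ∈ R, ψ (Algebra.trace ℚ_[ℓ] K ((cc + π ^ M * (r:K)) * b)) with hSdef
    have hshift : S * ψ (Algebra.trace ℚ_[ℓ] K ((π ^ M * (u₀:K)) * b)) = S := by
      rw [hSdef, Finset.sum_mul]
      have hterm : ∀ r ∈ R,
          ψ (Algebra.trace ℚ_[ℓ] K ((cc + π ^ M * (r:K)) * b)) *
            ψ (Algebra.trace ℚ_[ℓ] K ((π ^ M * (u₀:K)) * b))
          = ψ (Algebra.trace ℚ_[ℓ] K ((cc + π ^ M * ((rep (r + u₀) : O) : K)) * b)) := by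
        intro r hr
        rw [← AddChar.map_add_eq_mul, ← map_add]
        have e : (cc + π ^ M * (r:K)) * b + (π ^ M * (u₀:K)) * b
            = (cc + π ^ M * (((r + u₀ : O) : O) : K)) * b := by
          push_cast; ring
        rw [e]
        exact hinv (r + u₀) (rep (r + u₀)) (hmk _).symm
      rw [Finset.sum_congr rfl hterm]
      refine Finset.sum_bij' (fun r _ => rep (r + u₀)) (fun r _ => rep (r - u₀))
        (fun r _ => hmem _) (fun r _ => hmem _) ?_ ?_ ?_
      · intro r hr
        have hm1 : rep (r + u₀) - (r + u₀) ∈ Jk := Ideal.Quotient.eq.mp (hmk _)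
        have e : rep (r + u₀) - u₀ - r = rep (r + u₀) - (r + u₀) := by ring
        have hmkeq : Ideal.Quotient.mk Jk (rep (r + u₀) - u₀) = Ideal.Quotient.mk Jk r :=
          Ideal.Quotient.eq.mpr (by rw [e]; exact hm1)
        have h7 : rep (rep (r + u₀) - u₀) = rep r := congrArg Quotient.out hmkeq
        show rep (rep (r + u₀) - u₀) = r
        rw [h7, hfix r hr]
      · intro r hr
        have hm1 : rep (r - u₀) - (r - u₀) ∈ Jk := Ideal.Quotient.eq.mp (hmk _)
        have e : rep (r - u₀) + u₀ - r = rep (r - u₀) - (r - u₀) := by ring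
        have hmkeq : Ideal.Quotient.mk Jk (rep (r - u₀) + u₀) = Ideal.Quotient.mk Jk r :=
          Ideal.Quotient.eq.mpr (by rw [e]; exact hm1)
        have h7 : rep (rep (r - u₀) + u₀) = rep r := congrArg Quotient.out hmkeq
        show rep (rep (r - u₀) + u₀) = r
        rw [h7, hfix r hr]
      · intro r hr
        rfl
    have hS0 : S = 0 := by
      by_contra hS
      exact hu₀ (mul_left_cancel₀ hS (by rw [hshift, mul_one]))
    rw [hS0, zero_mul]
    exact (if_neg h).symm

section
variable {ℓ : ℕ} [Fact (Nat.Prime ℓ)]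
    {K : Type*} [Field K] [Algebra ℚ_[ℓ] K] [FiniteDimensional ℚ_[ℓ] K]
    {Cp : Type*} [NormedField Cp]

lemma single_component
    (O : Subring K)
    (π : K) (hπ0 : π ≠ 0) (hπO : π ∈ O)
    (q : ℕ) (sq : Cp) (hsq : sq ^ 2 = (q : Cp)) (hq0 : (q : Cp) ≠ 0) (hsq0 : sq ≠ 0)
    (δ : ℕ)
    (hδ : ∀ x : K, (∀ y ∈ O, ‖Algebra.trace ℚ_[ℓ] K (x * y)‖ ≤ 1) ↔ π ^ δ * x ∈ O)
    (ψ : AddChar ℚ_[ℓ] Cp) (hψ : ∀ x : ℚ_[ℓ], ψ x = 1 ↔ ‖x‖ ≤ 1)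
    (I : (K → Cp) →ₗ[Cp] Cp)
    (hI : ∀ (a : K) (N : ℤ),
      I (fun x => if ∃ y ∈ O, x = a + π ^ N * y then 1 else 0) =
        sq⁻¹ ^ δ * (q : Cp) ^ (-N))
    (core : ∀ (b cc : K) (M : ℤ),
      I (fun x => (if ∃ u ∈ O, x = cc + π ^ M * u then 1 else 0) *
          ψ (Algebra.trace ℚ_[ℓ] K (x * b))) =
        if π ^ δ * (π ^ M * b) ∈ O then
          ψ (Algebra.trace ℚ_[ℓ] K (cc * b)) * (sq⁻¹ ^ δ * (q : Cp) ^ (-M)) else 0)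
    (t a : K) (N : ℤ) :
    I (fun x => if x ∈ O then (if ∃ u ∈ O, x + t = a + π ^ N * u then (1:Cp) else 0) else 0) =
      sq⁻¹ ^ δ *
        I (fun y => (if π ^ δ * y ∈ O then 1 else 0) *
          I (fun x => (if ∃ u ∈ O, x = a + π ^ N * u then (1:Cp) else 0) *
            ψ (Algebra.trace ℚ_[ℓ] K (x * y))) *
          (ψ (Algebra.trace ℚ_[ℓ] K (t * y)))⁻¹) := by
  have hψne : ∀ z : ℚ_[ℓ], ψ z ≠ 0 := by
    intro z h
    have h1 : ψ z * ψ (-z) = 1 := by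
      rw [← AddChar.map_add_eq_mul, add_neg_cancel, AddChar.map_zero_eq_one]
    rw [h, zero_mul] at h1
    exact zero_ne_one h1
  have hψsub : ∀ u v : ℚ_[ℓ], ψ u * (ψ v)⁻¹ = ψ (u - v) := by
    intro u v
    have h1 : ψ (u - v) * ψ v = ψ u := by
      rw [← AddChar.map_add_eq_mul, sub_add_cancel]
    field_simp [hψne v]
    linear_combination -h1
  set m : ℤ := min N 0 with hm
  have hm0 : m ≤ 0 := min_le_right _ _
  have hmN : m ≤ N := min_le_left _ _
  have hOmem : ∀ j : ℤ, 0 ≤ j → π ^ j ∈ O := by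
    intro j hj
    lift j to ℕ using hj
    rw [zpow_natCast]
    exact pow_mem hπO _
  have hcollapse : ∀ (i j : ℤ) (z : K), π ^ i * (π ^ j * z) = π ^ (i + j) * z := by
    intro i j z
    rw [zpow_add₀ hπ0]; ring
  have hδz : ∀ z : K, π ^ δ * z = π ^ (δ:ℤ) * z := by
    intro z; rw [zpow_natCast]
  -- ball condition equivalence
  have hbc : ∀ y : K, (∃ u ∈ O, y = 0 + π ^ (-(δ:ℤ) - m) * u) ↔
      (π ^ δ * y ∈ O ∧ π ^ δ * (π ^ N * y) ∈ O) := by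
    intro y
    constructor
    · rintro ⟨u, hu, rfl⟩
      constructor
      · rw [zero_add, hδz, hcollapse]
        have e : (δ:ℤ) + (-(δ:ℤ) - m) = -m := by ring
        rw [e]
        exact mul_mem (hOmem _ (by linarith)) hu
      · rw [zero_add, hcollapse, hδz, hcollapse]
        have e : (δ:ℤ) + (N + (-(δ:ℤ) - m)) = N - m := by ring
        rw [e]
        exact mul_mem (hOmem _ (by linarith)) hu
    · rintro ⟨h1, h2⟩
      refine ⟨π ^ ((δ:ℤ) + m) * y, ?_, ?_⟩
      · rcases le_total N 0 with hN | hN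
        · have hmeq : m = N := by rw [hm, min_eq_left hN]
          rw [hmeq]
          rw [hδz, hcollapse] at h2
          exact h2
        · have hmeq : m = 0 := by rw [hm, min_eq_right hN]
          rw [hmeq, add_zero]
          rw [hδz] at h1
          exact h1
      · rw [zero_add, hcollapse]
        have e : -(δ:ℤ) - m + ((δ:ℤ) + m) = 0 := by ring
        rw [e, zpow_zero, one_mul]
  -- rewrite the outer integrand
  have hout : (fun y => (if π ^ δ * y ∈ O then 1 else 0) *
      I (fun x => (if ∃ u ∈ O, x = a + π ^ N * u then (1:Cp) else 0) *
        ψ (Algebra.trace ℚ_[ℓ] K (x * y))) *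
      (ψ (Algebra.trace ℚ_[ℓ] K (t * y)))⁻¹)
      = (sq⁻¹ ^ δ * (q : Cp) ^ (-N)) •
        (fun y => (if ∃ u ∈ O, y = 0 + π ^ (-(δ:ℤ) - m) * u then (1:Cp) else 0) *
          ψ (Algebra.trace ℚ_[ℓ] K (y * (a - t)))) := by
    funext y
    rw [core y a N, Pi.smul_apply, smul_eq_mul]
    by_cases hcy : π ^ δ * y ∈ O ∧ π ^ δ * (π ^ N * y) ∈ O
    · rw [if_pos hcy.1, if_pos hcy.2, if_pos ((hbc y).mpr hcy), one_mul, one_mul]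
      have e1 : ψ (Algebra.trace ℚ_[ℓ] K (a * y)) * (ψ (Algebra.trace ℚ_[ℓ] K (t * y)))⁻¹
          = ψ (Algebra.trace ℚ_[ℓ] K (y * (a - t))) := by
        rw [hψsub, ← map_sub]
        congr 1
        ring
      calc ψ (Algebra.trace ℚ_[ℓ] K (a * y)) * (sq⁻¹ ^ δ * (q:Cp) ^ (-N)) *
            (ψ (Algebra.trace ℚ_[ℓ] K (t * y)))⁻¹
          = (ψ (Algebra.trace ℚ_[ℓ] K (a * y)) * (ψ (Algebra.trace ℚ_[ℓ] K (t * y)))⁻¹) *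
            (sq⁻¹ ^ δ * (q:Cp) ^ (-N)) := by ring
        _ = _ := by rw [e1]; ring
    · have h1 : ¬(∃ u ∈ O, y = 0 + π ^ (-(δ:ℤ) - m) * u) := fun hb => hcy ((hbc y).mp hb)
      rw [if_neg h1, zero_mul, mul_zero]
      rcases not_and_or.mp hcy with h | h
      · rw [if_neg h, zero_mul, zero_mul]
      · rw [if_neg h, mul_zero, zero_mul]
  rw [hout, map_smul, smul_eq_mul, core (a - t) 0 (-(δ:ℤ) - m)]
  have hEc : π ^ δ * (π ^ (-(δ:ℤ) - m) * (a - t)) = π ^ (-m) * (a - t) := by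
    rw [hδz, hcollapse]
    congr 2
    ring
  rw [hEc]
  have hψ0 : ψ (Algebra.trace ℚ_[ℓ] K (0 * (a - t))) = 1 := by
    rw [zero_mul, map_zero, AddChar.map_zero_eq_one]
  rw [hψ0, one_mul]
  have hexp : -(-(δ:ℤ) - m) = (δ:ℤ) + m := by ring
  rw [hexp]
  -- scalar helper
  have hunit : sq⁻¹ ^ δ * sq⁻¹ ^ δ * (q:Cp) ^ ((δ:ℤ)) = 1 := by
    have h1 : sq⁻¹ * sq⁻¹ * (q:Cp) = 1 := by
      rw [← hsq]; field_simp
    rw [zpow_natCast, ← mul_pow, ← mul_pow, h1, one_pow]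
  -- now the LHS
  by_cases hc : π ^ (-m) * (a - t) ∈ O
  · rw [if_pos hc]
    rcases le_total 0 N with hN | hN
    · have hmeq : m = 0 := by rw [hm, min_eq_right hN]
      have ha : a - t ∈ O := by
        have := hc
        rw [hmeq, neg_zero, zpow_zero, one_mul] at this
        exact this
      have hLfn : (fun x => if x ∈ O then
            (if ∃ u ∈ O, x + t = a + π ^ N * u then (1:Cp) else 0) else 0)
          = fun x => if ∃ u ∈ O, x = (a - t) + π ^ N * u then (1:Cp) else 0 := by
        funext x
        by_cases hx : x ∈ O
        · rw [if_pos hx]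
          apply if_congr _ rfl rfl
          constructor
          · rintro ⟨u, hu, he⟩; exact ⟨u, hu, by linear_combination he⟩
          · rintro ⟨u, hu, he⟩; exact ⟨u, hu, by linear_combination he⟩
        · rw [if_neg hx, if_neg]
          rintro ⟨u, hu, rfl⟩
          exact hx (add_mem ha (mul_mem (hOmem N hN) hu))
      rw [hLfn, hI (a - t) N, hmeq, add_zero]
      have hq2 : ((q:Cp) ^ ((δ:ℤ))) ≠ 0 := zpow_ne_zero _ hq0
      linear_combination (-(sq⁻¹ ^ δ * (q:Cp) ^ (-N))) * hunit
    · have hmeq : m = N := by rw [hm, min_eq_left hN]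
      have hLfn : (fun x => if x ∈ O then
            (if ∃ u ∈ O, x + t = a + π ^ N * u then (1:Cp) else 0) else 0)
          = fun x => if ∃ u ∈ O, x = 0 + π ^ (0:ℤ) * u then (1:Cp) else 0 := by
        funext x
        by_cases hx : x ∈ O
        · rw [if_pos hx, if_pos, if_pos ⟨x, hx, by simp⟩]
          refine ⟨π ^ (-N) * (x - (a - t)), ?_, ?_⟩
          · have e : π ^ (-N) * (x - (a - t)) = π ^ (-N) * x - π ^ (-m) * (a - t) := by
              rw [hmeq]; ring
            rw [e]
            exact sub_mem (mul_mem (hOmem _ (by linarith)) hx) hc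
          · have e : π ^ N * (π ^ (-N) * (x - (a - t))) = x - (a - t) := by
              rw [hcollapse, add_neg_cancel, zpow_zero, one_mul]
            rw [e]
            ring
        · rw [if_neg hx, if_neg]
          rintro ⟨u, hu, he⟩
          rw [zpow_zero, one_mul, zero_add] at he
          exact hx (he ▸ hu)
      rw [hLfn, hI 0 0, hmeq, neg_zero, zpow_zero]
      have hqq : (q:Cp) ^ (-N) * (q:Cp) ^ N = 1 := by
        rw [← zpow_add₀ hq0, neg_add_cancel, zpow_zero]
      rw [zpow_add₀ hq0 ((δ:ℤ)) N]
      linear_combination (-(sq⁻¹ ^ δ * (q:Cp) ^ (-N) * (q:Cp) ^ N)) * hunit +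
        (-(sq⁻¹ ^ δ)) * hqq
  · rw [if_neg hc]
    have hLfn : (fun x => if x ∈ O then
          (if ∃ u ∈ O, x + t = a + π ^ N * u then (1:Cp) else 0) else 0)
        = fun _ => (0:Cp) := by
      funext x
      by_cases hx : x ∈ O
      · rw [if_pos hx, if_neg]
        rintro ⟨u, hu, he⟩
        apply hc
        have e : π ^ (-m) * (a - t) = π ^ (-m) * x - π ^ (-m) * (π ^ N * u) := by
          linear_combination (-(π ^ (-m))) * he
        rw [e, hcollapse]
        exact sub_mem (mul_mem (hOmem _ (by linarith)) hx)
          (mul_mem (hOmem _ (by linarith)) hu)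
      · rw [if_neg hx]
    rw [hLfn]
    have hz : (fun _ : K => (0:Cp)) = (0 : K → Cp) := rfl
    rw [hz, map_zero]
    ring
end

/-- Poisson-type summation: for any compactly supported locally constant `f` on `K` and
any `t ∈ K`,
`∫_{o_K} f(x+t) dx = q^{-δ/2} ∫_{𝔡⁻¹} f̂(y) ζ^{-tr(ty)} dy`,
where `f̂(y) = ∫_K f(x)ζ^{tr(xy)}dx` and `𝔡⁻¹ = π^{-δ}O` is the inverse different. -/
theorem poisson_summation_local
    (ℓ : ℕ) [Fact (Nat.Prime ℓ)]
    (K : Type*) [Field K] [Algebra ℚ_[ℓ] K] [FiniteDimensional ℚ_[ℓ] K]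
    [Algebra ℤ_[ℓ] K] [IsScalarTower ℤ_[ℓ] ℚ_[ℓ] K]
    (Cp : Type*) [NormedField Cp] [CompleteSpace Cp]
    (O : Subring K) (hO : ∀ x : K, x ∈ O ↔ IsIntegral ℤ_[ℓ] x)
    (π : K) (hπ0 : π ≠ 0) (hπO : π ∈ O)
    (hπunif : ¬ IsUnit (⟨π, hπO⟩ : O))
    (hgen : ∀ x (hx : x ∈ O), ¬ IsUnit (⟨x, hx⟩ : O) → ∃ y ∈ O, x = π * y)
    (q : ℕ) (hq1 : 1 < q)
    (hq : Nat.card (O ⧸ Ideal.span {(⟨π, hπO⟩ : O)}) = q)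
    (sq : Cp) (hsq : sq ^ 2 = (q : Cp))
    (δ : ℕ)
    (hδ : ∀ x : K, (∀ y ∈ O, ‖Algebra.trace ℚ_[ℓ] K (x * y)‖ ≤ 1) ↔ π ^ δ * x ∈ O)
    (ψ : AddChar ℚ_[ℓ] Cp) (hψ : ∀ x : ℚ_[ℓ], ψ x = 1 ↔ ‖x‖ ≤ 1)
    (I : (K → Cp) →ₗ[Cp] Cp)
    (hI : ∀ (a : K) (N : ℤ),
      I (fun x => if ∃ y ∈ O, x = a + π ^ N * y then 1 else 0) =
        sq⁻¹ ^ δ * (q : Cp) ^ (-N))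
    (f : K → Cp)
    (hf : ∃ (n : ℕ) (a : Fin n → K) (N : Fin n → ℤ) (c : Fin n → Cp),
      f = ∑ i, c i • (fun x => if ∃ y ∈ O, x = a i + π ^ (N i) * y then (1:Cp) else 0)) :
    ∀ t : K,
      I (fun x => if x ∈ O then f (x + t) else 0) =
        sq⁻¹ ^ δ *
          I (fun y => (if π ^ δ * y ∈ O then 1 else 0) *
            I (fun x => f x * ψ (Algebra.trace ℚ_[ℓ] K (x * y))) *
            (ψ (Algebra.trace ℚ_[ℓ] K (t * y)))⁻¹) := by
  intro t
  have hq0 : (q : Cp) ≠ 0 := q_ne_zero O hO π hπO hπunif hgen q hq1 hq ψ hψ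
  have hsq0 : sq ≠ 0 := by
    intro h
    apply hq0
    rw [← hsq, h]
    ring
  have hFinBase : Finite (O ⧸ Ideal.span {(⟨π, hπO⟩ : O)}) := by
    have hpos : 0 < Nat.card (O ⧸ Ideal.span {(⟨π, hπO⟩ : O)}) := by rw [hq]; omega
    exact (Nat.card_pos_iff.mp hpos).2
  have hFin : ∀ k : ℕ, Finite (O ⧸ Ideal.span {(⟨π, hπO⟩ : O) ^ k}) :=
    fun k => finQuotPow _ hFinBase k
  have hF1 : ∀ x : K, ∃ M : ℕ, π ^ M * x ∈ O :=
    exists_pow_mul_mem O hO π hπO hπunif hgen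
  have core := core_lemma O π hπ0 hπO q sq δ hδ ψ hψ I hI hFin hF1
  have single := single_component O π hπ0 hπO q sq hsq hq0 hsq0 δ hδ ψ hψ I hI core t
  obtain ⟨n, a, N, c, rfl⟩ := hf
  have hL : (fun x => if x ∈ O then
        (∑ i, c i • fun x' => if ∃ y ∈ O, x' = a i + π ^ N i * y then (1:Cp) else 0) (x + t)
        else 0)
      = ∑ i, c i • (fun x => if x ∈ O then
        (if ∃ u ∈ O, x + t = a i + π ^ N i * u then (1:Cp) else 0) else 0) := by
    funext x
    by_cases hx : x ∈ O
    · simp only [Finset.sum_apply, Pi.smul_apply, smul_eq_mul, if_pos hx]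
    · simp only [Finset.sum_apply, Pi.smul_apply, smul_eq_mul, if_neg hx, mul_zero,
        Finset.sum_const_zero]
  have hRin : ∀ y : K, (fun x =>
        (∑ i, c i • fun x' => if ∃ y' ∈ O, x' = a i + π ^ N i * y' then (1:Cp) else 0) x *
          ψ (Algebra.trace ℚ_[ℓ] K (x * y)))
      = ∑ i, c i • (fun x => (if ∃ u ∈ O, x = a i + π ^ N i * u then (1:Cp) else 0) *
          ψ (Algebra.trace ℚ_[ℓ] K (x * y))) := by
    intro y
    funext x
    simp only [Finset.sum_apply, Pi.smul_apply, smul_eq_mul, Finset.sum_mul, mul_assoc]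
  have hRout : (fun y => (if π ^ δ * y ∈ O then 1 else 0) *
        I (fun x =>
          (∑ i, c i • fun x' => if ∃ y' ∈ O, x' = a i + π ^ N i * y' then (1:Cp) else 0) x *
          ψ (Algebra.trace ℚ_[ℓ] K (x * y))) *
        (ψ (Algebra.trace ℚ_[ℓ] K (t * y)))⁻¹)
      = ∑ i, c i • (fun y => (if π ^ δ * y ∈ O then 1 else 0) *
        I (fun x => (if ∃ u ∈ O, x = a i + π ^ N i * u then (1:Cp) else 0) *
          ψ (Algebra.trace ℚ_[ℓ] K (x * y))) *
        (ψ (Algebra.trace ℚ_[ℓ] K (t * y)))⁻¹) := by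
    funext y
    rw [hRin y, map_sum, Finset.sum_apply]
    simp only [map_smul, smul_eq_mul, Pi.smul_apply]
    rw [Finset.mul_sum, Finset.sum_mul]
    refine Finset.sum_congr rfl fun i _ => ?_
    ring
  rw [hL, map_sum, hRout, map_sum, Finset.mul_sum]
  refine Finset.sum_congr rfl fun i _ => ?_
  rw [map_smul, map_smul, smul_eq_mul, smul_eq_mul, single (a i) (N i)]
  ring
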